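/- Let M_1, …, M_n be real symmetric d×d matrices, and for a permutation σ of {1,…,n} define e_2(σ) := Σ_{1 ≤ i < j ≤ n} M_{σ(i)} M_{σ(j)}. Then −Σ_{σ, σ' ∈ S_n} (e_2(σ) − e_2(σ'))^2 ⪰ −(n−1)! · Σ_{i, j ∈ [n], i ≠ j} (M_i M_j − M_j M_i)^2, where the left sum ranges over all ordered pairs of permutations. -/

import Mathlib

open Matrix

/-- The noncommutative second elementary symmetric polynomial associated to a permutation σ:
`e₂(σ) = Σ_{i < j} M_{σ(i)} M_{σ(j)}`. -/
noncomputable def e2 {n d : ℕ} (M : Fin n → Matrix (Fin d) (Fin d) ℝ)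
    (σ : Equiv.Perm (Fin n)) : Matrix (Fin d) (Fin d) ℝ :=
  ∑ i : Fin n, ∑ j : Fin n, if i < j then M (σ i) * M (σ j) else 0

private lemma psdSum {d : ℕ} {ι : Type*} (s : Finset ι) (f : ι → Matrix (Fin d) (Fin d) ℝ)
    (h : ∀ i ∈ s, (f i).PosSemidef) : (∑ i ∈ s, f i).PosSemidef := by
  induction s using Finset.cons_induction with
  | empty => simpa using Matrix.PosSemidef.zero
  | cons a s ha ih =>
    rw [Finset.sum_cons]
    exact (h a (Finset.mem_cons_self a s)).add (ih fun i hi => h i (Finset.mem_cons_of_mem hi))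

private lemma psd_of_skew {d : ℕ} (D : Matrix (Fin d) (Fin d) ℝ) (h : Dᵀ = -D) :
    (-(D ^ 2)).PosSemidef := by
  have e : -(D ^ 2) = Dᴴ * D := by
    rw [conjTranspose_eq_transpose_of_trivial, h, sq, neg_mul]
  rw [e]
  exact posSemidef_conjTranspose_mul_self D

private lemma sum_ne_reindex {n : ℕ} {α : Type*} [AddCommMonoid α] (σ : Equiv.Perm (Fin n))
    (F : Fin n → Fin n → α) :
    (∑ i : Fin n, ∑ j : Fin n, if i ≠ j then F (σ i) (σ j) else 0)
      = ∑ i : Fin n, ∑ j : Fin n, if i ≠ j then F i j else 0 := by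
  refine Fintype.sum_equiv σ _ _ fun i => ?_
  refine Fintype.sum_equiv σ _ _ fun j => ?_
  simp [σ.injective.ne_iff]

private lemma ite_transpose {d : ℕ} (c : Prop) [Decidable c] (X : Matrix (Fin d) (Fin d) ℝ) :
    (if c then X else 0)ᵀ = if c then Xᵀ else 0 := by
  split_ifs <;> simp

private lemma e2_add_transpose {n d : ℕ} (M : Fin n → Matrix (Fin d) (Fin d) ℝ)
    (hsymm : ∀ i, (M i).IsSymm) (σ : Equiv.Perm (Fin n)) :
    e2 M σ + (e2 M σ)ᵀ = ∑ i : Fin n, ∑ j : Fin n, (if i ≠ j then M i * M j else 0) := by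
  have ht : (e2 M σ)ᵀ = ∑ i : Fin n, ∑ j : Fin n,
      (if j < i then M (σ i) * M (σ j) else 0) := by
    unfold e2
    rw [transpose_sum]
    rw [Finset.sum_comm]
    refine Fintype.sum_congr _ _ fun i => ?_
    rw [transpose_sum]
    refine Fintype.sum_congr _ _ fun j => ?_
    rw [ite_transpose, transpose_mul, (hsymm _).eq, (hsymm _).eq]
  rw [ht]
  unfold e2
  rw [← sum_ne_reindex σ (fun i j => M i * M j), ← Finset.sum_add_distrib]
  refine Fintype.sum_congr _ _ fun i => ?_
  rw [← Finset.sum_add_distrib]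
  refine Fintype.sum_congr _ _ fun j => ?_
  rcases lt_trichotomy i j with h | h | h
  · simp [h, h.ne, not_lt_of_gt h]
  · simp [h]
  · simp [h, h.ne', not_lt_of_gt h]

private lemma swap_lt_iff {n : ℕ} (a b : Fin n) (hab : (b : ℕ) = (a : ℕ) + 1) :
    ∀ i j : Fin n, (i, j) ≠ (a, b) → (i, j) ≠ (b, a) →
      ((Equiv.swap a b i < Equiv.swap a b j) ↔ (i < j)) := by
  intro i j h1 h2
  have h1' : ¬(i = a ∧ j = b) := fun ⟨x, y⟩ => h1 (by simp [x, y])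
  have h2' : ¬(i = b ∧ j = a) := fun ⟨x, y⟩ => h2 (by simp [x, y])
  clear h1 h2
  simp only [Equiv.swap_apply_def]
  split_ifs <;> simp only [Fin.ext_iff, Fin.lt_def, not_and] at * <;> omega

private lemma e2_mul_swap {n d : ℕ} (M : Fin n → Matrix (Fin d) (Fin d) ℝ)
    (σ : Equiv.Perm (Fin n)) (a b : Fin n) (hab : (b : ℕ) = (a : ℕ) + 1) :
    e2 M σ - e2 M (σ * Equiv.swap a b)
      = M (σ a) * M (σ b) - M (σ b) * M (σ a) := by
  set τ := Equiv.swap a b with hτ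
  have hs : e2 M (σ * τ)
      = ∑ i : Fin n, ∑ j : Fin n, (if τ i < τ j then M (σ i) * M (σ j) else 0) := by
    unfold e2
    refine (Fintype.sum_equiv τ _ _ fun i => ?_).symm
    refine Fintype.sum_equiv τ _ _ fun j => ?_
    simp [hτ, Equiv.swap_apply_self, Equiv.Perm.mul_apply]
  rw [hs]
  unfold e2
  rw [← Finset.sum_sub_distrib]
  have : ∀ i : Fin n,
      (∑ j : Fin n, if i < j then M (σ i) * M (σ j) else 0) -
        (∑ j : Fin n, if τ i < τ j then M (σ i) * M (σ j) else 0)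
      = ∑ j : Fin n, ((if i < j then M (σ i) * M (σ j) else 0)
          - (if τ i < τ j then M (σ i) * M (σ j) else 0)) := fun i =>
    (Finset.sum_sub_distrib _ _).symm
  rw [Fintype.sum_congr _ _ this, ← Finset.sum_product']
  have hab' : a < b := by rw [Fin.lt_def]; omega
  rw [Finset.sum_eq_add_of_mem (a, b) (b, a) (by simp) (by simp)
    (by simp [Prod.ext_iff]; omega)]
  · have ha : τ a = b := Equiv.swap_apply_left a b
    have hb : τ b = a := Equiv.swap_apply_right a b
    simp only [ha, hb, if_pos hab', if_neg (not_lt_of_gt hab'), sub_zero, zero_sub]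
    abel
  · rintro ⟨i, j⟩ _ ⟨hne1, hne2⟩
    have := swap_lt_iff a b hab i j hne1 hne2
    simp only [← hτ] at this
    simp only [this]
    exact sub_self _

private lemma sum_perm_eq {n : ℕ} {α : Type*} [AddCommMonoid α]
    (h : Fin n → Fin n → α) (a b c e : Fin n) (hab : a ≠ b) (hce : c ≠ e) :
    ∑ σ : Equiv.Perm (Fin n), h (σ a) (σ b) = ∑ σ : Equiv.Perm (Fin n), h (σ c) (σ e) := by
  have hb1 : Equiv.swap c a e ≠ a := by
    intro hx
    apply hce
    apply (Equiv.swap c a).injective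
    rw [hx, Equiv.swap_apply_left]
  obtain ⟨π, hc, he⟩ : ∃ π : Equiv.Perm (Fin n), π c = a ∧ π e = b := by
    refine ⟨Equiv.swap (Equiv.swap c a e) b * Equiv.swap c a, ?_, ?_⟩
    · rw [Equiv.Perm.mul_apply, Equiv.swap_apply_left,
        Equiv.swap_apply_of_ne_of_ne (Ne.symm hb1) hab]
    · rw [Equiv.Perm.mul_apply, Equiv.swap_apply_left]
  refine Fintype.sum_equiv (Equiv.mulRight π) _ _ fun x => ?_
  simp [Equiv.Perm.mul_apply, hc, he]

private lemma sum_perm_count {n : ℕ} {α : Type*} [AddCommGroup α] [Module ℝ α]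
    (h : Fin n → Fin n → α) (a b : Fin n) (hab : a ≠ b) :
    ∑ σ : Equiv.Perm (Fin n), h (σ a) (σ b)
      = ((n - 2).factorial : ℝ) • ∑ i : Fin n, ∑ j : Fin n, (if i ≠ j then h i j else 0) := by
  have h2 : 2 ≤ n := by
    by_contra hn
    push_neg at hn
    interval_cases n
    · exact a.elim0
    · exact hab (Subsingleton.elim a b)
  set S := ∑ σ : Equiv.Perm (Fin n), h (σ a) (σ b) with hS
  set T := ∑ i : Fin n, ∑ j : Fin n, (if i ≠ j then h i j else 0) with hT
  have step1 : ∀ c e : Fin n, (if c ≠ e then S else 0)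
      = ∑ σ : Equiv.Perm (Fin n), (if c ≠ e then h (σ c) (σ e) else 0) := by
    intro c e
    split_ifs with hce
    · exact sum_perm_eq h a b c e hab hce
    · simp
  have big : ∑ c : Fin n, ∑ e : Fin n, (if c ≠ e then S else 0)
      = (Fintype.card (Equiv.Perm (Fin n))) • T := by
    calc ∑ c : Fin n, ∑ e : Fin n, (if c ≠ e then S else 0)
        = ∑ c : Fin n, ∑ e : Fin n, ∑ σ : Equiv.Perm (Fin n),
            (if c ≠ e then h (σ c) (σ e) else 0) := by
          refine Fintype.sum_congr _ _ fun c => ?_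
          exact Fintype.sum_congr _ _ fun e => step1 c e
      _ = ∑ c : Fin n, ∑ σ : Equiv.Perm (Fin n), ∑ e : Fin n,
            (if c ≠ e then h (σ c) (σ e) else 0) :=
          Fintype.sum_congr _ _ fun c => Finset.sum_comm
      _ = ∑ σ : Equiv.Perm (Fin n), ∑ c : Fin n, ∑ e : Fin n,
            (if c ≠ e then h (σ c) (σ e) else 0) := Finset.sum_comm
      _ = ∑ _σ : Equiv.Perm (Fin n), T := by
          refine Fintype.sum_congr _ _ fun σ => ?_
          rw [hT, sum_ne_reindex σ h]
      _ = (Fintype.card (Equiv.Perm (Fin n))) • T := by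
          rw [Finset.sum_const, Finset.card_univ]
  have lhs_count : ∑ c : Fin n, ∑ e : Fin n, (if c ≠ e then S else 0)
      = n • ((n - 1) • S) := by
    have inner : ∀ c : Fin n, (∑ e : Fin n, if c ≠ e then S else 0) = (n - 1) • S := by
      intro c
      rw [Finset.sum_ite, Finset.sum_const_zero, add_zero, Finset.sum_const]
      congr 1
      rw [Finset.filter_ne, Finset.card_erase_of_mem (Finset.mem_univ c),
        Finset.card_univ, Fintype.card_fin]
    rw [Fintype.sum_congr _ _ inner, Finset.sum_const, Finset.card_univ, Fintype.card_fin]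
  have hcard : Fintype.card (Equiv.Perm (Fin n)) = n.factorial := by
    simp [Fintype.card_perm]
  have main : ((n * (n - 1) : ℕ) : ℝ) • S = ((n.factorial : ℕ) : ℝ) • T := by
    rw [Nat.cast_smul_eq_nsmul, Nat.cast_smul_eq_nsmul, ← hcard, ← big, lhs_count,
      mul_smul]
  have hfac : ((n.factorial : ℕ) : ℝ) = ((n * (n - 1) : ℕ) : ℝ) * ((n - 2).factorial : ℝ) := by
    obtain ⟨m, rfl⟩ : ∃ m, n = m + 2 := ⟨n - 2, by omega⟩
    have e1 : m + 2 - 1 = m + 1 := by omega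
    have e2 : m + 2 - 2 = m := by omega
    rw [e1, e2]
    rw [Nat.factorial_succ, Nat.factorial_succ]
    push_cast
    ring
  have hne : ((n * (n - 1) : ℕ) : ℝ) ≠ 0 := by
    have : 0 < n * (n - 1) := by
      have h1 : 1 ≤ n - 1 := by omega
      exact Nat.mul_pos (by omega) h1
    exact_mod_cast this.ne'
  calc S = (((n * (n - 1) : ℕ) : ℝ))⁻¹ • (((n * (n - 1) : ℕ) : ℝ) • S) := by
        rw [inv_smul_smul₀ hne]
    _ = (((n * (n - 1) : ℕ) : ℝ))⁻¹ • (((n.factorial : ℕ) : ℝ) • T) := by rw [main]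
    _ = ((n - 2).factorial : ℝ) • T := by
        rw [smul_smul, hfac, inv_mul_cancel_left₀ hne]

/-- For symmetric M₁,…,M_n,
−Σ_{σ,σ'∈Sₙ} (e₂(σ) − e₂(σ'))² ⪰ −(n−1)! Σ_{i≠j} (M_iM_j − M_jM_i)². -/
theorem statement18 (n d : ℕ) (M : Fin n → Matrix (Fin d) (Fin d) ℝ)
    (hsymm : ∀ i, (M i).IsSymm) :
    ((-(∑ σ : Equiv.Perm (Fin n), ∑ σ' : Equiv.Perm (Fin n), (e2 M σ - e2 M σ') ^ 2))
      - (-(((n - 1).factorial : ℝ) •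
          ∑ i : Fin n, ∑ j : Fin n,
            if i ≠ j then (M i * M j - M j * M i) ^ 2 else 0))).PosSemidef := by
  classical
  have hskew : ∀ σ σ' : Equiv.Perm (Fin n), (e2 M σ - e2 M σ')ᵀ = -(e2 M σ - e2 M σ') := by
    intro σ σ'
    have h1 := e2_add_transpose M hsymm σ
    have h2 := e2_add_transpose M hsymm σ'
    have h1' : (e2 M σ)ᵀ
        = (∑ i : Fin n, ∑ j : Fin n, (if i ≠ j then M i * M j else 0)) - e2 M σ := by
      rw [← h1]; abel
    have h2' : (e2 M σ')ᵀ
        = (∑ i : Fin n, ∑ j : Fin n, (if i ≠ j then M i * M j else 0)) - e2 M σ' := by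
      rw [← h2]; abel
    rw [transpose_sub, h1', h2']
    abel
  have hpsd : ∀ σ σ' : Equiv.Perm (Fin n), (-((e2 M σ - e2 M σ') ^ 2)).PosSemidef :=
    fun σ σ' => psd_of_skew _ (hskew σ σ')
  set Q := ∑ i : Fin n, ∑ j : Fin n, (if i ≠ j then (M i * M j - M j * M i) ^ 2 else 0)
    with hQ
  clear_value Q
  rcases Nat.lt_or_ge n 2 with hn | hn
  · have hz : Q = 0 := by
      rw [hQ]
      interval_cases n
      · simp
      · simp [Subsingleton.elim (α := Fin 1)]
    rw [hz, smul_zero, neg_zero, sub_zero]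
    simp only [← Finset.sum_neg_distrib]
    refine psdSum _ _ fun σ _ => ?_
    exact psdSum _ _ fun σ' _ => hpsd σ σ'
  · set A : Fin (n - 1) → Fin n := fun k => ⟨k.1, by have := k.2; omega⟩ with hA
    set B : Fin (n - 1) → Fin n := fun k => ⟨k.1 + 1, by have := k.2; omega⟩ with hB
    have hAB : ∀ k, ((B k : ℕ)) = (A k : ℕ) + 1 := fun k => rfl
    have hABne : ∀ k, A k ≠ B k := by
      intro k
      simp only [hA, hB, ne_eq, Fin.mk.injEq]
      omega
    set C : Fin n → Fin n → Matrix (Fin d) (Fin d) ℝ :=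
      fun x y => -((M x * M y - M y * M x) ^ 2) with hCdef
    have hCQ : (∑ i : Fin n, ∑ j : Fin n, (if i ≠ j then C i j else 0)) = -Q := by
      rw [hQ, ← Finset.sum_neg_distrib]
      refine Fintype.sum_congr _ _ fun i => ?_
      rw [← Finset.sum_neg_distrib]
      refine Fintype.sum_congr _ _ fun j => ?_
      split_ifs <;> simp [hCdef]
    have htot : ∑ σ : Equiv.Perm (Fin n), ∑ k : Fin (n - 1), C (σ (A k)) (σ (B k))
        = ((n - 1).factorial : ℝ) • (-Q) := by
      rw [Finset.sum_comm]
      calc ∑ k : Fin (n - 1), ∑ σ : Equiv.Perm (Fin n), C (σ (A k)) (σ (B k))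
          = ∑ _k : Fin (n - 1), ((n - 2).factorial : ℝ) • (-Q) := by
            refine Fintype.sum_congr _ _ fun k => ?_
            rw [sum_perm_count C (A k) (B k) (hABne k), hCQ]
        _ = (n - 1) • (((n - 2).factorial : ℝ) • (-Q)) := by
            rw [Finset.sum_const, Finset.card_univ, Fintype.card_fin]
        _ = ((n - 1).factorial : ℝ) • (-Q) := by
            rw [← Nat.cast_smul_eq_nsmul ℝ, smul_smul]
            congr 1
            have e1 : n - 1 = (n - 2) + 1 := by omega
            rw [e1, Nat.factorial_succ]
            push_cast
            ring
    have hFC : ∀ (σ : Equiv.Perm (Fin n)) (k : Fin (n - 1)),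
        -((e2 M σ - e2 M (σ * Equiv.swap (A k) (B k))) ^ 2) = C (σ (A k)) (σ (B k)) := by
      intro σ k
      rw [e2_mul_swap M σ (A k) (B k) (hAB k), hCdef]
    have hinj : ∀ σ : Equiv.Perm (Fin n),
        Function.Injective (fun k : Fin (n - 1) => σ * Equiv.swap (A k) (B k)) := by
      intro σ k l hkl
      simp only at hkl
      have hsw : Equiv.swap (A k) (B k) = Equiv.swap (A l) (B l) := mul_left_cancel hkl
      have hv := congrArg (fun e : Equiv.Perm (Fin n) => e (A k)) hsw
      simp only [Equiv.swap_apply_left, Equiv.swap_apply_def] at hv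
      apply Fin.ext
      split_ifs at hv <;>
        simp only [hA, hB, Fin.ext_iff, Fin.mk.injEq] at * <;> omega
    have key : ∀ σ : Equiv.Perm (Fin n),
        ((∑ σ' : Equiv.Perm (Fin n), -((e2 M σ - e2 M σ') ^ 2))
          - ∑ k : Fin (n - 1), C (σ (A k)) (σ (B k))).PosSemidef := by
      intro σ
      have himg : ∑ k : Fin (n - 1), C (σ (A k)) (σ (B k))
          = ∑ σ' ∈ Finset.image
                (fun k : Fin (n - 1) => σ * Equiv.swap (A k) (B k)) Finset.univ,
              -((e2 M σ - e2 M σ') ^ 2) := by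
        rw [Finset.sum_image (fun x _ y _ h => hinj σ h)]
        exact (Fintype.sum_congr _ _ fun k => hFC σ k).symm
      rw [himg, ← Finset.sum_sdiff (Finset.subset_univ _), add_sub_cancel_right]
      exact psdSum _ _ fun σ' _ => hpsd σ σ'
    have goal_eq : (-(∑ σ : Equiv.Perm (Fin n), ∑ σ' : Equiv.Perm (Fin n),
            (e2 M σ - e2 M σ') ^ 2))
        - (-(((n - 1).factorial : ℝ) • Q))
        = ∑ σ : Equiv.Perm (Fin n),
            ((∑ σ' : Equiv.Perm (Fin n), -((e2 M σ - e2 M σ') ^ 2))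
              - ∑ k : Fin (n - 1), C (σ (A k)) (σ (B k))) := by
      rw [Finset.sum_sub_distrib, htot, smul_neg]
      simp only [Finset.sum_neg_distrib]
    rw [goal_eq]
    exact psdSum _ _ fun σ _ => key σ
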